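/- For every non-trivial product distribution P on {0,1}^n (i.e., with 0 < p_j < 1 for all j, where p_j = Pr[z_j = 1]) and every antichain A ⊆ {0,1}^n (viewed as subsets of [n] under inclusion), the probability that a P-random point lies in A is at most the maximum over ℓ ∈ {0,1,...,n} of Pr_{z∼P}[|z| = ℓ], where |z| denotes the number of ones in z. -/

import Mathlib

open Finset

section SpernerProduct

variable {α : Type*} [DecidableEq α]

/-- product weight of a set `t` relative to ground set `σ` -/
noncomputable def pmu (p : α → ℝ) (σ t : Finset α) : ℝ :=
  ∏ j ∈ σ, if j ∈ t then p j else 1 - p j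

/-- total weight of a family of sets -/
noncomputable def pfam (p : α → ℝ) (σ : Finset α) (B : Finset (Finset α)) : ℝ :=
  ∑ t ∈ B, pmu p σ t

/-- weight of the `ℓ`-th level -/
noncomputable def plev (p : α → ℝ) (σ : Finset α) (ℓ : ℕ) : ℝ :=
  pfam p σ (σ.powersetCard ℓ)

/-- upper shadow of `B` at target level `ℓ` inside `σ` -/
def upSh (σ : Finset α) (ℓ : ℕ) (B : Finset (Finset α)) : Finset (Finset α) :=
  (σ.powersetCard ℓ).filter (fun t => ∃ s ∈ B, s ⊂ t)

lemma pmu_pos {p : α → ℝ} (hp : ∀ j, 0 < p j ∧ p j < 1) (σ t : Finset α) :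
    0 < pmu p σ t := by
  apply Finset.prod_pos
  intro j _
  rcases hp j with ⟨h0, h1⟩
  split <;> linarith

lemma pmu_nonneg' {p : α → ℝ} (hp : ∀ j, 0 < p j ∧ p j < 1) (σ t : Finset α) :
    0 ≤ pmu p σ t := le_of_lt (pmu_pos hp σ t)

lemma pfam_nonneg' {p : α → ℝ} (hp : ∀ j, 0 < p j ∧ p j < 1) (σ : Finset α)
    (B : Finset (Finset α)) : 0 ≤ pfam p σ B :=
  Finset.sum_nonneg (fun t _ => pmu_nonneg' hp σ t)

lemma plev_nonneg' {p : α → ℝ} (hp : ∀ j, 0 < p j ∧ p j < 1) (σ : Finset α) (ℓ : ℕ) :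
    0 ≤ plev p σ ℓ := pfam_nonneg' hp σ _

lemma pfam_mono' {p : α → ℝ} (hp : ∀ j, 0 < p j ∧ p j < 1) (σ : Finset α)
    {B C : Finset (Finset α)} (h : B ⊆ C) : pfam p σ B ≤ pfam p σ C :=
  Finset.sum_le_sum_of_subset_of_nonneg h (fun t _ _ => pmu_nonneg' hp σ t)

lemma plev_eq_zero {p : α → ℝ} {σ : Finset α} {ℓ : ℕ} (h : σ.card < ℓ) :
    plev p σ ℓ = 0 := by
  unfold plev pfam
  rw [powersetCard_eq_empty.2 h, Finset.sum_empty]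

lemma plev_pos {p : α → ℝ} (hp : ∀ j, 0 < p j ∧ p j < 1) {σ : Finset α} {ℓ : ℕ}
    (h : ℓ ≤ σ.card) : 0 < plev p σ ℓ := by
  obtain ⟨t, hts, htc⟩ := Finset.exists_subset_card_eq h
  have ht : t ∈ σ.powersetCard ℓ := Finset.mem_powersetCard.2 ⟨hts, htc⟩
  have := Finset.single_le_sum (f := fun t => pmu p σ t)
    (fun s _ => le_of_lt (pmu_pos hp σ s)) ht
  have := pmu_pos hp σ t
  unfold plev pfam
  linarith

lemma pmu_insert {p : α → ℝ} {σ : Finset α} {x : α} (hx : x ∉ σ) (t : Finset α) :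
    pmu p (insert x σ) t = (if x ∈ t then p x else 1 - p x) * pmu p σ t := by
  unfold pmu; rw [Finset.prod_insert hx]

lemma pmu_erase {p : α → ℝ} {σ : Finset α} {x : α} (hx : x ∉ σ) (t : Finset α) :
    pmu p σ (t.erase x) = pmu p σ t := by
  unfold pmu
  apply Finset.prod_congr rfl
  intro j hj
  have : j ≠ x := fun h => hx (h ▸ hj)
  simp [Finset.mem_erase, this]

/-- splitting a family weight along a fresh coordinate -/
lemma pfam_insert {p : α → ℝ} {σ : Finset α} {x : α} (hx : x ∉ σ)
    (B : Finset (Finset α)) :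
    pfam p (insert x σ) B =
      (1 - p x) * pfam p σ (B.filter (fun t => x ∉ t)) +
      p x * pfam p σ ((B.filter (fun t => x ∈ t)).image (fun t => t.erase x)) := by
  have himg : pfam p σ ((B.filter (fun t => x ∈ t)).image (fun t => t.erase x)) =
      ∑ t ∈ B.filter (fun t => x ∈ t), pmu p σ t := by
    unfold pfam
    rw [Finset.sum_image]
    · exact Finset.sum_congr rfl (fun t _ => pmu_erase hx t)
    · intro a ha b hb hab
      have hxa : x ∈ a := (Finset.mem_filter.1 ha).2
      have hxb : x ∈ b := (Finset.mem_filter.1 hb).2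
      rw [← Finset.insert_erase hxa, ← Finset.insert_erase hxb, (show a.erase x = b.erase x from hab)]
  rw [himg]
  unfold pfam
  rw [Finset.mul_sum, Finset.mul_sum,
    ← Finset.sum_filter_add_sum_filter_not B (fun t => x ∉ t)]
  congr 1
  · apply Finset.sum_congr rfl
    intro t ht
    have : x ∉ t := (Finset.mem_filter.1 ht).2
    rw [pmu_insert hx, if_neg this]
  · rw [show (B.filter (fun t => ¬ x ∉ t)) = (B.filter (fun t => x ∈ t)) by
      apply Finset.filter_congr; intro t _; simp]
    apply Finset.sum_congr rfl
    intro t ht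
    have : x ∈ t := (Finset.mem_filter.1 ht).2
    rw [pmu_insert hx, if_pos this]

lemma plev_insert_zero {p : α → ℝ} {σ : Finset α} {x : α} (hx : x ∉ σ) :
    plev p (insert x σ) 0 = (1 - p x) * plev p σ 0 := by
  unfold plev pfam
  rw [powersetCard_zero, powersetCard_zero, Finset.sum_singleton, Finset.sum_singleton,
    pmu_insert hx]
  simp

lemma plev_insert_succ {p : α → ℝ} {σ : Finset α} {x : α} (hx : x ∉ σ) (ℓ : ℕ) :
    plev p (insert x σ) (ℓ + 1) = (1 - p x) * plev p σ (ℓ + 1) + p x * plev p σ ℓ := by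
  unfold plev pfam
  rw [powersetCard_succ_insert hx]
  rw [Finset.sum_union]
  · congr 1
    · rw [Finset.mul_sum]
      apply Finset.sum_congr rfl
      intro t ht
      have hts : t ⊆ σ := (Finset.mem_powersetCard.1 ht).1
      have : x ∉ t := fun h => hx (hts h)
      rw [pmu_insert hx, if_neg this]
    · rw [Finset.sum_image, Finset.mul_sum]
      · apply Finset.sum_congr rfl
        intro t ht
        have hts : t ⊆ σ := (Finset.mem_powersetCard.1 ht).1
        have hxt : x ∉ t := fun h => hx (hts h)
        rw [pmu_insert hx, if_pos (Finset.mem_insert_self x t)]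
        congr 1
        rw [← pmu_erase hx (insert x t), Finset.erase_insert hxt]
      · intro a ha b hb hab
        have hxa : x ∉ a := fun h => hx ((Finset.mem_powersetCard.1 ha).1 h)
        have hxb : x ∉ b := fun h => hx ((Finset.mem_powersetCard.1 hb).1 h)
        rw [← Finset.erase_insert hxa, ← Finset.erase_insert hxb, hab]
  · rw [Finset.disjoint_left]
    intro t ht ht'
    obtain ⟨u, hu, rfl⟩ := Finset.mem_image.1 ht'
    have : insert x u ⊆ σ := (Finset.mem_powersetCard.1 ht).1
    exact hx (this (Finset.mem_insert_self x u))

/-- log-concavity of the level weights (Poisson binomial) -/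
lemma plev_logConcave {p : α → ℝ} (hp : ∀ j, 0 < p j ∧ p j < 1) (σ : Finset α) :
    ∀ ℓ : ℕ, plev p σ ℓ * plev p σ (ℓ + 2) ≤ plev p σ (ℓ + 1) ^ 2 := by
  induction σ using Finset.induction_on with
  | empty =>
      intro ℓ
      rw [plev_eq_zero (by simp : (∅ : Finset α).card < ℓ + 2)]
      have h1 : (0:ℝ) ≤ plev p (∅ : Finset α) (ℓ+1) ^ 2 := sq_nonneg _
      linarith
  | @insert x σ hx ih =>
      intro ℓ
      rcases hp x with ⟨hp0, hp1⟩
      have hu : (0:ℝ) ≤ 1 - p x := by linarith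
      have hv : (0:ℝ) ≤ p x := le_of_lt hp0
      match ℓ with
      | 0 =>
          rw [plev_insert_zero hx, plev_insert_succ hx 0, plev_insert_succ hx 1]
          have h1 := ih 0
          have n0 := plev_nonneg' hp σ 0
          have n1 := plev_nonneg' hp σ 1
          have n2 := plev_nonneg' hp σ 2
          have key : (0:ℝ) ≤ (1 - p x) * (1 - p x) * (plev p σ 1 ^ 2 - plev p σ 0 * plev p σ 2) := by
            have := sub_nonneg.2 h1
            positivity
          nlinarith [mul_nonneg (mul_nonneg hu hv) (mul_nonneg n0 n1),
            mul_nonneg (mul_nonneg hv hv) (mul_nonneg n0 n0)]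
      | (m+1) =>
          rw [plev_insert_succ hx m, plev_insert_succ hx (m+1), plev_insert_succ hx (m+2)]
          set a := plev p σ m with ha
          set b := plev p σ (m+1) with hb
          set c := plev p σ (m+2) with hc
          set d := plev p σ (m+3) with hd
          have hIH1 : a * c ≤ b ^ 2 := ih m
          have hIH2 : b * d ≤ c ^ 2 := ih (m+1)
          have na : 0 ≤ a := plev_nonneg' hp σ m
          have nb : 0 ≤ b := plev_nonneg' hp σ (m+1)
          have nc : 0 ≤ c := plev_nonneg' hp σ (m+2)
          have nd : 0 ≤ d := plev_nonneg' hp σ (m+3)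
          have hbcad : a * d ≤ b * c := by
            by_cases hdz : σ.card < m + 3
            · rw [hd, plev_eq_zero hdz]
              simpa using mul_nonneg nb nc
            · push_neg at hdz
              have hbpos : 0 < b := plev_pos hp (by omega)
              have hcpos : 0 < c := plev_pos hp (by omega)
              nlinarith [mul_pos hbpos hcpos]
          nlinarith [mul_nonneg hu hv, mul_nonneg (mul_nonneg hu hv) (sub_nonneg.2 hbcad),
            mul_nonneg (mul_nonneg hu hu) (sub_nonneg.2 hIH2),
            mul_nonneg (mul_nonneg hv hv) (sub_nonneg.2 hIH1)]

/-- The core algebraic inequality behind Harper's product theorem. -/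
lemma cube_alg {u v A0 A1 S0 S1 U wm w wp : ℝ}
    (hu : 0 ≤ u) (hv : 0 ≤ v)
    (nwm : 0 < wm) (nw : 0 < w) (nwp : 0 ≤ wp)
    (nA0 : 0 ≤ A0) (nA1 : 0 ≤ A1) (nS0 : 0 ≤ S0) (nS1 : 0 ≤ S1) (nU : 0 ≤ U)
    (h1 : A0 * wp ≤ S0 * w) (h2 : A1 * w ≤ S1 * wm)
    (h3 : A0 ≤ U) (h4 : S1 ≤ U) (h5 : wm * wp ≤ w ^ 2) :
    (u * A0 + v * A1) * (u * wp + v * w) ≤ (u * S0 + v * U) * (u * w + v * wm) := by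
  have tv : A1 * w ≤ U * wm := le_trans h2 (mul_le_mul_of_nonneg_right h4 (le_of_lt nwm))
  have tuv : A0 * w + A1 * wp ≤ S0 * wm + U * w := by
    rcases le_or_gt (A1 * w) (A0 * wm) with hcase | hcase
    · have k1 : A1 * wp * w ≤ S0 * wm * w := by nlinarith
      have k2 : A1 * wp ≤ S0 * wm := le_of_mul_le_mul_right k1 nw
      nlinarith
    · have key : (A0 * w + A1 * wp) * (w * wm) ≤ (S0 * wm + U * w) * (w * wm) := by
        nlinarith [mul_le_mul_of_nonneg_right h1 (mul_nonneg (le_of_lt nwm) (le_of_lt nwm)),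
          mul_le_mul_of_nonneg_right h2 (mul_nonneg (le_of_lt nw) (le_of_lt nw)),
          mul_le_mul_of_nonneg_right h4 (mul_nonneg (mul_nonneg (le_of_lt nwm) (le_of_lt nw)) (le_of_lt nw)),
          mul_nonneg (le_of_lt (sub_pos.2 hcase)) (sub_nonneg.2 h5)]
      exact le_of_mul_le_mul_right key (mul_pos nw nwm)
  nlinarith [mul_nonneg (mul_nonneg hu hu) (sub_nonneg.2 h1),
    mul_nonneg (mul_nonneg hu hv) (sub_nonneg.2 tuv),
    mul_nonneg (mul_nonneg hv hv) (sub_nonneg.2 tv)]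

/-- normalized matching at the bottom level -/
lemma nm_zero {p : α → ℝ} (hp : ∀ j, 0 < p j ∧ p j < 1) (σ : Finset α)
    {B : Finset (Finset α)} (hB : B ⊆ σ.powersetCard 0) :
    pfam p σ B * plev p σ 1 ≤ pfam p σ (upSh σ 1 B) * plev p σ 0 := by
  rw [powersetCard_zero] at hB
  rcases Finset.subset_singleton_iff.1 hB with rfl | rfl
  · have h0 : pfam p σ (∅ : Finset (Finset α)) = 0 := by simp [pfam]
    rw [h0, zero_mul]
    exact mul_nonneg (pfam_nonneg' hp σ _) (le_of_lt (plev_pos hp (Nat.zero_le _)))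
  · have hsh : upSh σ 1 {(∅ : Finset α)} = σ.powersetCard 1 := by
      unfold upSh
      apply Finset.filter_true_of_mem
      intro t ht
      refine ⟨∅, Finset.mem_singleton_self _, ?_⟩
      rw [Finset.empty_ssubset]
      exact Finset.card_pos.1 (by rw [(Finset.mem_powersetCard.1 ht).2]; norm_num)
    have h1 : pfam p σ {(∅ : Finset α)} = plev p σ 0 := by
      unfold plev
      rw [powersetCard_zero]
    rw [hsh, h1]
    show plev p σ 0 * plev p σ 1 ≤ plev p σ 1 * plev p σ 0
    ring_nf
    exact le_refl _

/-- Normalized matching property of the product-weighted cube. -/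
theorem nm {p : α → ℝ} (hp : ∀ j, 0 < p j ∧ p j < 1) (σ : Finset α) :
    ∀ (ℓ : ℕ) (B : Finset (Finset α)), B ⊆ σ.powersetCard ℓ →
      pfam p σ B * plev p σ (ℓ + 1) ≤ pfam p σ (upSh σ (ℓ + 1) B) * plev p σ ℓ := by
  induction σ using Finset.induction_on with
  | empty =>
      intro ℓ B hB
      rw [plev_eq_zero (by simp : (∅ : Finset α).card < ℓ + 1), mul_zero]
      exact mul_nonneg (pfam_nonneg' hp _ _) (plev_nonneg' hp _ _)
  | @insert x σ hx ih =>
      intro ℓ B hB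
      match ℓ with
      | 0 => exact nm_zero hp _ hB
      | (m+1) =>
        by_cases hbig : σ.card < m + 1
        · have : (insert x σ).card < m + 2 := by
            rw [Finset.card_insert_of_notMem hx]; omega
          rw [plev_eq_zero this, mul_zero]
          exact mul_nonneg (pfam_nonneg' hp _ _) (plev_nonneg' hp _ _)
        · push_neg at hbig
          rcases hp x with ⟨hp0, hp1⟩
          have hu : (0:ℝ) ≤ 1 - p x := by linarith
          have hv : (0:ℝ) ≤ p x := le_of_lt hp0
          set B0 := B.filter (fun t => x ∉ t) with hB0_def
          set B1 := (B.filter (fun t => x ∈ t)).image (fun t => t.erase x) with hB1_def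
          have hB0 : B0 ⊆ σ.powersetCard (m+1) := by
            intro t ht
            rw [Finset.mem_filter] at ht
            obtain ⟨htB, hxt⟩ := ht
            have := Finset.mem_powersetCard.1 (hB htB)
            refine Finset.mem_powersetCard.2 ⟨?_, this.2⟩
            intro j hj
            rcases Finset.mem_insert.1 (this.1 hj) with rfl | h
            · exact absurd hj hxt
            · exact h
          have hB1 : B1 ⊆ σ.powersetCard m := by
            intro t' ht'
            obtain ⟨t, ht, rfl⟩ := Finset.mem_image.1 ht'
            rw [Finset.mem_filter] at ht
            obtain ⟨htB, hxt⟩ := ht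
            have := Finset.mem_powersetCard.1 (hB htB)
            refine Finset.mem_powersetCard.2 ⟨?_, ?_⟩
            · intro j hj
              rw [Finset.mem_erase] at hj
              rcases Finset.mem_insert.1 (this.1 hj.2) with h | h
              · exact absurd h hj.1
              · exact h
            · rw [Finset.card_erase_of_mem hxt, this.2]
              omega
          set S0 := upSh σ (m+2) B0 with hS0_def
          set S1 := upSh σ (m+1) B1 with hS1_def
          set U := B0 ∪ S1 with hU_def
          have h1 := ih (m+1) B0 hB0
          have h2 := ih m B1 hB1
          have h3 : pfam p σ B0 ≤ pfam p σ U := pfam_mono' hp σ Finset.subset_union_left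
          have h4 : pfam p σ S1 ≤ pfam p σ U := pfam_mono' hp σ Finset.subset_union_right
          have h5 := plev_logConcave hp σ m
          -- shadow lower bound
          have hsub0 : S0 ⊆ (upSh (insert x σ) (m+2) B).filter (fun t => x ∉ t) := by
            intro t ht
            rw [hS0_def] at ht
            unfold upSh at ht
            rw [Finset.mem_filter] at ht
            obtain ⟨htP, s, hsB0, hst⟩ := ht
            have htσ := Finset.mem_powersetCard.1 htP
            have hxt : x ∉ t := fun h => hx (htσ.1 h)
            refine Finset.mem_filter.2 ⟨?_, hxt⟩
            unfold upSh
            refine Finset.mem_filter.2 ⟨Finset.mem_powersetCard.2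
              ⟨htσ.1.trans (Finset.subset_insert x σ), htσ.2⟩, ?_⟩
            exact ⟨s, (Finset.mem_filter.1 hsB0).1, hst⟩
          have hsub1 : U ⊆ ((upSh (insert x σ) (m+2) B).filter (fun t => x ∈ t)).image
              (fun t => t.erase x) := by
            intro t' ht'
            have ht'σ : t' ∈ σ.powersetCard (m+1) := by
              rcases Finset.mem_union.1 ht' with h | h
              · exact hB0 h
              · exact Finset.mem_filter.1 h |>.1
            have ht'sub := (Finset.mem_powersetCard.1 ht'σ).1
            have ht'card := (Finset.mem_powersetCard.1 ht'σ).2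
            have hxt' : x ∉ t' := fun h => hx (ht'sub h)
            refine Finset.mem_image.2 ⟨insert x t', ?_, Finset.erase_insert hxt'⟩
            refine Finset.mem_filter.2 ⟨?_, Finset.mem_insert_self x t'⟩
            unfold upSh
            refine Finset.mem_filter.2 ⟨Finset.mem_powersetCard.2
              ⟨Finset.insert_subset_insert x ht'sub,
               by rw [Finset.card_insert_of_notMem hxt', ht'card]⟩, ?_⟩
            rcases Finset.mem_union.1 ht' with h | h
            · exact ⟨t', (Finset.mem_filter.1 h).1, Finset.ssubset_insert hxt'⟩
            · rw [hS1_def] at h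
              unfold upSh at h
              obtain ⟨_, s1, hs1B1, hs1t'⟩ := Finset.mem_filter.1 h
              obtain ⟨s, hs, rfl⟩ := Finset.mem_image.1 hs1B1
              obtain ⟨hsB, hxs⟩ := Finset.mem_filter.1 hs
              refine ⟨s, hsB, ?_⟩
              rw [← Finset.insert_erase hxs]
              have hsubs : insert x (s.erase x) ⊆ insert x t' :=
                Finset.insert_subset_insert x hs1t'.subset
              refine Finset.ssubset_iff_subset_ne.2 ⟨hsubs, ?_⟩
              intro heq
              have hc1 : (insert x (s.erase x)).card = (s.erase x).card + 1 :=
                Finset.card_insert_of_notMem (Finset.notMem_erase x s)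
              have hc2 : (insert x t').card = t'.card + 1 :=
                Finset.card_insert_of_notMem hxt'
              have := Finset.card_lt_card hs1t'
              rw [heq, hc2] at hc1
              omega
          have hsh : (1 - p x) * pfam p σ S0 + p x * pfam p σ U
              ≤ pfam p (insert x σ) (upSh (insert x σ) (m+2) B) := by
            rw [pfam_insert hx]
            have l1 : pfam p σ S0 ≤ pfam p σ ((upSh (insert x σ) (m+2) B).filter
              (fun t => x ∉ t)) := pfam_mono' hp σ hsub0
            have l2 : pfam p σ U ≤ pfam p σ (((upSh (insert x σ) (m+2) B).filter
              (fun t => x ∈ t)).image (fun t => t.erase x)) := pfam_mono' hp σ hsub1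
            have k1 := mul_le_mul_of_nonneg_left l1 hu
            have k2 := mul_le_mul_of_nonneg_left l2 hv
            linarith
          have e1 : pfam p σ (upSh σ (m + 1 + 1) B0) = pfam p σ S0 := by
            rw [hS0_def]
          have h1' : pfam p σ B0 * plev p σ (m + 2) ≤ pfam p σ S0 * plev p σ (m + 1) := by
            rw [← e1]; exact h1
          have nwm : (0:ℝ) < plev p σ m := plev_pos hp (by omega)
          have nw : (0:ℝ) < plev p σ (m+1) := plev_pos hp hbig
          have key := cube_alg hu hv nwm nw (plev_nonneg' hp σ (m+2))
            (pfam_nonneg' hp σ B0) (pfam_nonneg' hp σ B1) (pfam_nonneg' hp σ S0)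
            (pfam_nonneg' hp σ S1) (pfam_nonneg' hp σ U) h1' h2 h3 h4
            (by nlinarith [plev_logConcave hp σ m])
          have hlev : (0:ℝ) ≤ (1 - p x) * plev p σ (m+1) + p x * plev p σ m := by
            nlinarith
          rw [pfam_insert hx B, plev_insert_succ hx (m+1), plev_insert_succ hx m,
            ← hB0_def, ← hB1_def]
          simp only [show m + 1 + 1 = m + 2 from rfl]
          calc ((1 - p x) * pfam p σ B0 + p x * pfam p σ B1) *
                ((1 - p x) * plev p σ (m+2) + p x * plev p σ (m+1))
              ≤ ((1 - p x) * pfam p σ S0 + p x * pfam p σ U) *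
                ((1 - p x) * plev p σ (m+1) + p x * plev p σ m) := key
            _ ≤ pfam p (insert x σ) (upSh (insert x σ) (m+2) B) *
                ((1 - p x) * plev p σ (m+1) + p x * plev p σ m) :=
                mul_le_mul_of_nonneg_right hsh hlev

/-- LYM inequality for product weights, by downward induction on the lowest level. -/
lemma lym_aux {p : α → ℝ} (hp : ∀ j, 0 < p j ∧ p j < 1) (σ : Finset α) :
    ∀ (k : ℕ) (A : Finset (Finset α)), IsAntichain (· ⊂ ·) (A : Set (Finset α)) →
      (∀ s ∈ A, s ⊆ σ) → (∀ s ∈ A, σ.card - k ≤ s.card) →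
      ∑ s ∈ A, pmu p σ s / plev p σ s.card ≤ 1 := by
  intro k
  induction k with
  | zero =>
      intro A hA hsub hcard
      have hA' : A ⊆ {σ} := by
        intro s hs
        rw [Finset.mem_singleton]
        have h1 : σ.card - 0 ≤ s.card := hcard s hs
        exact Finset.eq_of_subset_of_card_le (hsub s hs) (by omega)
      calc ∑ s ∈ A, pmu p σ s / plev p σ s.card
          ≤ ∑ s ∈ ({σ} : Finset (Finset α)), pmu p σ s / plev p σ s.card := by
            apply Finset.sum_le_sum_of_subset_of_nonneg hA'
            intro t ht _
            have : t = σ := Finset.mem_singleton.1 ht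
            subst this
            exact div_nonneg (le_of_lt (pmu_pos hp t t)) (le_of_lt (plev_pos hp le_rfl))
        _ = pmu p σ σ / plev p σ σ.card := Finset.sum_singleton _ _
        _ ≤ 1 := by
            unfold plev pfam
            rw [powersetCard_self, Finset.sum_singleton]
            rw [div_self (ne_of_gt (pmu_pos hp σ σ))]
  | succ k ih =>
      intro A hA hsub hcard
      by_cases hk : σ.card ≤ k
      · exact ih A hA hsub (fun s hs => by have := hcard s hs; omega)
      · push_neg at hk
        set m := σ.card - (k+1) with hm_def
        have hm1 : m + 1 = σ.card - k := by omega
        have hmcard : m + 1 ≤ σ.card := by omega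
        set T := A.filter (fun s => s.card = m) with hT_def
        set Sh := upSh σ (m+1) T with hSh_def
        have hTsub : T ⊆ σ.powersetCard m := by
          intro s hs
          rw [Finset.mem_filter] at hs
          exact Finset.mem_powersetCard.2 ⟨hsub s hs.1, hs.2⟩
        have hShsub : ∀ t ∈ Sh, t ∈ σ.powersetCard (m+1) := by
          intro t ht
          exact (Finset.mem_filter.1 ht).1
        have hdisj : Disjoint (A.filter (fun s => ¬ s.card = m)) Sh := by
          rw [Finset.disjoint_left]
          intro t htA htSh
          obtain ⟨s, hsT, hst⟩ := (Finset.mem_filter.1 htSh).2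
          have hsA : s ∈ A := (Finset.mem_filter.1 hsT).1
          exact hA (Finset.mem_coe.2 hsA) (Finset.mem_coe.2 (Finset.mem_filter.1 htA).1)
            (ne_of_lt hst) hst
        set A' := (A.filter (fun s => ¬ s.card = m)) ∪ Sh with hA'_def
        have hA'anti : IsAntichain (· ⊂ ·) (A' : Set (Finset α)) := by
          intro a ha b hb hne hab
          rw [Finset.mem_coe, hA'_def, Finset.mem_union] at ha hb
          rcases ha with ha | ha <;> rcases hb with hb | hb
          · exact hA (Finset.mem_coe.2 (Finset.mem_filter.1 ha).1)
              (Finset.mem_coe.2 (Finset.mem_filter.1 hb).1) hne hab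
          · have hac : m ≤ a.card := by
              have := hcard a (Finset.mem_filter.1 ha).1; omega
            have hane : ¬ a.card = m := (Finset.mem_filter.1 ha).2
            have hbc : b.card = m + 1 := (Finset.mem_powersetCard.1 (hShsub b hb)).2
            have := Finset.card_lt_card hab
            omega
          · obtain ⟨s, hsT, hsa⟩ := (Finset.mem_filter.1 ha).2
            have hsA : s ∈ A := (Finset.mem_filter.1 hsT).1
            have hsb : s ⊂ b := hsa.trans hab
            exact hA (Finset.mem_coe.2 hsA)
              (Finset.mem_coe.2 (Finset.mem_filter.1 hb).1) (ne_of_lt hsb) hsb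
          · have hac : a.card = m + 1 := (Finset.mem_powersetCard.1 (hShsub a ha)).2
            have hbc : b.card = m + 1 := (Finset.mem_powersetCard.1 (hShsub b hb)).2
            have := Finset.card_lt_card hab
            omega
        have hA'sub : ∀ s ∈ A', s ⊆ σ := by
          intro s hs
          rcases Finset.mem_union.1 hs with h | h
          · exact hsub s (Finset.mem_filter.1 h).1
          · exact (Finset.mem_powersetCard.1 (hShsub s h)).1
        have hA'card : ∀ s ∈ A', σ.card - k ≤ s.card := by
          intro s hs
          rcases Finset.mem_union.1 hs with h | h
          · have h1 := hcard s (Finset.mem_filter.1 h).1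
            have h2 := (Finset.mem_filter.1 h).2
            omega
          · have := (Finset.mem_powersetCard.1 (hShsub s h)).2
            omega
        have hIH := ih A' hA'anti hA'sub hA'card
        have hsplit : ∑ s ∈ A, pmu p σ s / plev p σ s.card
            = (∑ s ∈ T, pmu p σ s / plev p σ s.card)
            + ∑ s ∈ A.filter (fun s => ¬ s.card = m), pmu p σ s / plev p σ s.card := by
          rw [hT_def]
          exact (Finset.sum_filter_add_sum_filter_not A _ _).symm
        have hA'split : ∑ s ∈ A', pmu p σ s / plev p σ s.card
            = (∑ s ∈ A.filter (fun s => ¬ s.card = m), pmu p σ s / plev p σ s.card)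
            + ∑ s ∈ Sh, pmu p σ s / plev p σ s.card := by
          rw [hA'_def, Finset.sum_union hdisj]
        have hTsum : ∑ s ∈ T, pmu p σ s / plev p σ s.card = pfam p σ T / plev p σ m := by
          unfold pfam
          rw [Finset.sum_div]
          apply Finset.sum_congr rfl
          intro s hs
          rw [(Finset.mem_filter.1 hs).2]
        have hShsum : ∑ s ∈ Sh, pmu p σ s / plev p σ s.card
            = pfam p σ Sh / plev p σ (m+1) := by
          unfold pfam
          rw [Finset.sum_div]
          apply Finset.sum_congr rfl
          intro s hs
          rw [(Finset.mem_powersetCard.1 (hShsub s hs)).2]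
        have hnm := nm hp σ m T hTsub
        have hwm : 0 < plev p σ m := plev_pos hp (by omega)
        have hwm1 : 0 < plev p σ (m+1) := plev_pos hp hmcard
        have hkey : pfam p σ T / plev p σ m ≤ pfam p σ Sh / plev p σ (m+1) := by
          rw [div_le_div_iff₀ hwm hwm1]
          calc pfam p σ T * plev p σ (m+1) ≤ pfam p σ (upSh σ (m+1) T) * plev p σ m := hnm
            _ = pfam p σ Sh * plev p σ m := by rw [← hSh_def]
        linarith [hIH, hsplit, hA'split, hTsum, hShsum, hkey]

end SpernerProduct

/-- Sperner's lemma for general product measures: for a non-trivial product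
distribution `P` on `{0,1}^n` (identified with subsets of `[n]`) and any antichain `A`,
`Pr[z ∈ A] ≤ max_ℓ Pr[|z| = ℓ]`. -/
theorem sperner_product_measure (n : ℕ) (p : Fin n → ℝ)
    (hp : ∀ j, 0 < p j ∧ p j < 1)
    (A : Finset (Finset (Fin n)))
    (hA : IsAntichain (· ⊂ ·) (A : Set (Finset (Fin n)))) :
    (∑ s ∈ A, ∏ j, if j ∈ s then p j else 1 - p j) ≤
      (Finset.range (n + 1)).sup' Finset.nonempty_range_add_one (fun ℓ =>
        ∑ s ∈ (Finset.univ : Finset (Fin n)).powersetCard ℓ,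
          ∏ j, if j ∈ s then p j else 1 - p j) := by
  set σ : Finset (Fin n) := Finset.univ with hσ_def
  have hcard : σ.card = n := by simp [hσ_def]
  set M := (Finset.range (n + 1)).sup' Finset.nonempty_range_add_one (fun ℓ =>
        ∑ s ∈ σ.powersetCard ℓ, ∏ j, if j ∈ s then p j else 1 - p j) with hM_def
  have hplev : ∀ ℓ, plev p σ ℓ = ∑ s ∈ σ.powersetCard ℓ, ∏ j, if j ∈ s then p j else 1 - p j := by
    intro ℓ; rfl
  have hpmu : ∀ s : Finset (Fin n), pmu p σ s = ∏ j, if j ∈ s then p j else 1 - p j := by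
    intro s; rfl
  have hMle : ∀ s ∈ A, plev p σ s.card ≤ M := by
    intro s _
    rw [hM_def]
    have hmem : s.card ∈ Finset.range (n+1) := by
      rw [Finset.mem_range]
      have h1 : s.card ≤ Fintype.card (Fin n) := by simpa using Finset.card_le_univ s
      have h2 : Fintype.card (Fin n) = n := Fintype.card_fin n
      omega
    have := Finset.le_sup' (f := fun ℓ =>
      ∑ t ∈ σ.powersetCard ℓ, ∏ j, if j ∈ t then p j else 1 - p j) hmem
    rw [← hplev] at this
    exact this
  have hM0 : (0:ℝ) ≤ M := by
    have h0 : (0:ℕ) ∈ Finset.range (n+1) := by simp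
    have := Finset.le_sup' (f := fun ℓ =>
      ∑ t ∈ σ.powersetCard ℓ, ∏ j, if j ∈ t then p j else 1 - p j) h0
    rw [← hplev] at this
    have := (plev_pos hp (Nat.zero_le _)).trans_le this
    linarith
  have hlym := lym_aux hp σ σ.card A hA (fun s _ => Finset.subset_univ s)
    (fun s _ => by omega)
  calc ∑ s ∈ A, (∏ j, if j ∈ s then p j else 1 - p j)
      = ∑ s ∈ A, pmu p σ s := by
        apply Finset.sum_congr rfl; intro s _; rw [hpmu]
    _ ≤ ∑ s ∈ A, (pmu p σ s / plev p σ s.card) * M := by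
        apply Finset.sum_le_sum
        intro s hs
        have hpos : 0 < plev p σ s.card := plev_pos hp (by
          have h1 : s.card ≤ Fintype.card (Fin n) := by simpa using Finset.card_le_univ s
          have h2 : Fintype.card (Fin n) = n := Fintype.card_fin n
          omega)
        rw [div_mul_eq_mul_div, le_div_iff₀ hpos]
        exact mul_le_mul_of_nonneg_left (hMle s hs) (le_of_lt (pmu_pos hp σ s))
    _ = (∑ s ∈ A, pmu p σ s / plev p σ s.card) * M := by rw [Finset.sum_mul]
    _ ≤ 1 * M := mul_le_mul_of_nonneg_right hlym hM0
    _ = M := one_mul M
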